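/- arXiv:1008.3091 — 2 statements merged into one kernel-verified Lean document; each statement's English description precedes it below -/
import Mathlib

section
/- Let G=(V,E) be a finite connected simple graph with radius R(G) ≥ 1, let c ∈ C(G), let y ∈ V satisfy d_G(c,y) = R(G), and let γ be a shortest path from c to y. Call a vertex z 'good' if z ≠ y, every shortest path μ from c to z satisfies γ ∩ μ = {c}, and R(G) − 1 ≤ d_G(c,z) ≤ R(G). Then either there exists a good vertex z with d_G(c,z) = R(G), or every good vertex z satisfies d_G(c,z) = R(G) − 1 and there exists a good vertex z₀ such that every path μ from c to z₀ of length d_G(c,z₀) + 1 satisfies γ ∩ μ = {c}. -/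
open SimpleGraph

noncomputable def eccentr {V : Type} (G : SimpleGraph V) (x : V) : ℕ :=
  sSup (Set.range (G.dist x))

noncomputable def grRadius {V : Type} (G : SimpleGraph V) : ℕ :=
  sInf (Set.range (eccentr G))

def ncontract {V : Type} (G : SimpleGraph V) (x : V) :
    SimpleGraph {v : V // ¬ G.Adj x v} where
  Adj a b := G.Adj a.1 b.1 ∨
    (a.1 = x ∧ b.1 ≠ x ∧ ∃ y, G.Adj x y ∧ G.Adj y b.1) ∨
    (b.1 = x ∧ a.1 ≠ x ∧ ∃ y, G.Adj x y ∧ G.Adj y a.1)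
  symm.symm a b h := by
    rcases h with h | h | h
    · exact Or.inl h.symm
    · exact Or.inr (Or.inr h)
    · exact Or.inr (Or.inl h)
  loopless.irrefl a h := by
    rcases h with h | ⟨h1, h2, -⟩ | ⟨h1, h2, -⟩
    · exact G.loopless.irrefl _ h
    · exact h2 h1
    · exact h2 h1

/-- A vertex `z` is *good* (with respect to the center `c`, the far vertex `y` and the
shortest path `γ` from `c` to `y`) if `z ≠ y`, every shortest path `μ` from `c` to `z`
meets `γ` only at `c`, and `R(G) - 1 ≤ d(c,z) ≤ R(G)`. -/
def Good {V : Type} (G : SimpleGraph V) {c y : V} (γ : G.Walk c y) (z : V) : Prop :=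
  z ≠ y ∧
    (∀ μ : G.Walk c z, μ.IsPath → μ.length = G.dist c z →
      ∀ v ∈ γ.support, v ∈ μ.support → v = c) ∧
    grRadius G - 1 ≤ G.dist c z ∧ G.dist c z ≤ grRadius G

theorem stmt_2 {V : Type} [Fintype V] (G : SimpleGraph V) (hconn : G.Connected)
    (hR : 1 ≤ grRadius G) (c y : V) (hc : eccentr G c = grRadius G)
    (hy : G.dist c y = grRadius G) (γ : G.Walk c y) (hγp : γ.IsPath)
    (hγl : γ.length = grRadius G) :
    (∃ z : V, Good G γ z ∧ G.dist c z = grRadius G) ∨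
    ((∀ z : V, Good G γ z → G.dist c z = grRadius G - 1) ∧
      ∃ z₀ : V, Good G γ z₀ ∧
        ∀ μ : G.Walk c z₀, μ.IsPath → μ.length = G.dist c z₀ + 1 →
          ∀ v ∈ γ.support, v ∈ μ.support → v = c) := by
  classical
  set R := grRadius G with hRdef
  -- every vertex is within distance R of c
  have hub : ∀ z : V, G.dist c z ≤ R := by
    intro z
    have : G.dist c z ≤ eccentr G c :=
      le_csSup (Set.finite_range _).bddAbove ⟨z, rfl⟩
    omega
  -- γ is a cons
  cases γ with
  | nil => simp at hγl; omega
  | cons hadj γ' =>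
    rename_i v1
    -- eccentricity of v1 is at least R and attained at some w
    have hecc1 : R ≤ eccentr G v1 := Nat.sInf_le ⟨v1, rfl⟩
    obtain ⟨w, hw⟩ : ∃ w : V, eccentr G v1 = G.dist v1 w := by
      have hmem : sSup (Set.range (G.dist v1)) ∈ Set.range (G.dist v1) :=
        Nat.sSup_mem ⟨G.dist v1 v1, ⟨v1, rfl⟩⟩ (Set.finite_range _).bddAbove
      obtain ⟨w, hw⟩ := hmem
      exact ⟨w, hw.symm⟩
    have hwR : R ≤ G.dist v1 w := hw ▸ hecc1
    have hγ'len : γ'.length + 1 = R := by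
      simpa [Nat.add_comm] using hγl
    -- key lemma: for v on γ, v ≠ c, d(v1,v) + 1 ≤ d(c,v)
    have key1 : ∀ v ∈ (Walk.cons hadj γ').support, v ≠ c →
        G.dist v1 v + 1 ≤ G.dist c v := by
      intro v hv hvc
      have hv' : v ∈ γ'.support := by
        rcases (by simpa [Walk.support_cons] using hv : v = c ∨ v ∈ γ'.support) with h | h
        · exact absurd h hvc
        · exact h
      have hsum : (γ'.takeUntil v hv').length + (γ'.dropUntil v hv').length
          = γ'.length := by
        rw [← Walk.length_append, γ'.take_spec hv']
      have h1 : G.dist v1 v ≤ (γ'.takeUntil v hv').length :=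
        dist_le _
      have h2 : G.dist v y ≤ (γ'.dropUntil v hv').length :=
        dist_le _
      have h3 : G.dist c y ≤ G.dist c v + G.dist v y := hconn.dist_triangle
      have h4 : G.dist c v ≤ (γ'.takeUntil v hv').length + 1 := by
        have : G.dist c v ≤ (Walk.cons hadj (γ'.takeUntil v hv')).length :=
          dist_le _
        simpa [Nat.add_comm] using this
      omega
    -- key lemma: any walk from c to w of length ≤ R meets γ only at c
    have key2 : ∀ μ : G.Walk c w, μ.length ≤ R →
        ∀ v ∈ (Walk.cons hadj γ').support, v ∈ μ.support → v = c := by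
      intro μ hμlen v hvγ hvμ
      by_contra hvc
      have h1 := key1 v hvγ hvc
      have hsum : (μ.takeUntil v hvμ).length + (μ.dropUntil v hvμ).length
          = μ.length := by
        rw [← Walk.length_append, μ.take_spec hvμ]
      have h2 : G.dist c v ≤ (μ.takeUntil v hvμ).length := dist_le _
      have h3 : G.dist v w ≤ (μ.dropUntil v hvμ).length := dist_le _
      have h4 : G.dist v1 w ≤ G.dist v1 v + G.dist v w := hconn.dist_triangle
      omega
    -- w ≠ y
    have hwy : w ≠ y := by
      intro h
      have h2 : G.dist v1 y ≤ γ'.length := dist_le _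
      rw [h] at hwR
      omega
    -- R - 1 ≤ d(c,w)
    have hlb : R - 1 ≤ G.dist c w := by
      have h1 : G.dist v1 w ≤ G.dist v1 c + G.dist c w := hconn.dist_triangle
      have h2 : G.dist v1 c ≤ 1 := by
        have : G.dist v1 c ≤ (Walk.cons hadj.symm Walk.nil).length := dist_le _
        simpa using this
      omega
    have hgood : Good G (Walk.cons hadj γ') w := by
      refine ⟨hwy, fun μ _ hμl => key2 μ (by rw [hμl]; exact hub w), hlb, hub w⟩
    by_cases hex : ∃ z : V, Good G (Walk.cons hadj γ') z ∧ G.dist c z = R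
    · exact Or.inl hex
    · right
      push_neg at hex
      constructor
      · intro z hz
        have h1 := hz.2.2.1
        have h2 := hz.2.2.2
        have h3 := hex z hz
        omega
      · refine ⟨w, hgood, fun μ _ hμl => key2 μ ?_⟩
        have := hex w hgood
        have := hub w
        omega
end

section
/- Let G=(V,E) be a finite connected simple graph and let c ∈ C(G) be a center vertex. Define the sequence of graphs G₀ = G and G_{i+1} = G_i / c (the neighborhood contraction of G_i at c; note c remains a vertex of each G_i). Then for every k with 0 ≤ k ≤ R(G), the graph G_k has radius R(G) − k; in particular, G_{R(G)} has exactly one vertex. -/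
open SimpleGraph

/-- Iterated neighborhood contraction, keeping track of the ambient vertex type,
the current graph and the distinguished vertex `c` (which always survives each
contraction as the merged vertex). `iterC G c k` is `(Gₖ, c)` where `G₀ = G` and
`Gᵢ₊₁ = Gᵢ / c`. -/
def iterC {V : Type} (G : SimpleGraph V) (c : V) : ℕ → Σ W : Type, SimpleGraph W × W
  | 0 => ⟨V, G, c⟩
  | k + 1 =>
      let s := iterC G c k
      ⟨{v : s.1 // ¬ s.2.1.Adj s.2.2 v}, ncontract s.2.1 s.2.2, ⟨s.2.2, s.2.1.loopless.irrefl _⟩⟩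

section A
variable {W : Type}

lemma ecc_dist_le [Finite W] (G : SimpleGraph W) (u b : W) :
    G.dist u b ≤ eccentr G u :=
  le_csSup (Set.Finite.bddAbove (Set.finite_range _)) ⟨b, rfl⟩

lemma ecc_exists [Finite W] [Nonempty W] (G : SimpleGraph W) (u : W) :
    ∃ b, eccentr G u = G.dist u b := by
  have h := Nat.sSup_mem (s := Set.range (G.dist u)) ⟨_, ⟨Classical.arbitrary W, rfl⟩⟩
    (Set.Finite.bddAbove (Set.finite_range _))
  obtain ⟨b, hb⟩ := h
  exact ⟨b, hb.symm⟩

lemma penult {G : SimpleGraph W} (hconn : G.Connected) {a b : W} (h : 1 ≤ G.dist a b) :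
    ∃ y, G.Adj y b ∧ G.dist a y + 1 = G.dist a b := by
  obtain ⟨p, hp⟩ := (hconn a b).exists_walk_length_eq_dist
  have hp' : p.reverse.length = G.dist a b := by simpa using hp
  rcases hq : p.reverse with _ | ⟨hadj, q⟩
  · rw [hq] at hp'; simp only [Walk.length_nil] at hp'; omega
  · rename_i y
    rw [hq] at hp'
    simp [Walk.length_cons] at hp'
    refine ⟨y, hadj.symm, ?_⟩
    have h1 : G.dist a y ≤ q.length := by
      have := SimpleGraph.dist_le q.reverse
      simpa [SimpleGraph.dist_comm] using this
    have h2 : G.dist a b ≤ G.dist a y + 1 := by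
      calc G.dist a b ≤ G.dist a y + G.dist y b := hconn.dist_triangle
        _ ≤ G.dist a y + 1 := by
            have : G.dist y b = 1 := SimpleGraph.dist_eq_one_iff_adj.mpr hadj.symm
            omega
    omega
end A


section B
variable {W : Type} (H : SimpleGraph W) (x : W)

def xvert : {v : W // ¬ H.Adj x v} := ⟨x, H.loopless.irrefl x⟩

lemma nc_adj {a b : {v : W // ¬ H.Adj x v}} : (ncontract H x).Adj a b ↔
    (H.Adj a.1 b.1 ∨
    (a.1 = x ∧ b.1 ≠ x ∧ ∃ y, H.Adj x y ∧ H.Adj y b.1) ∨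
    (b.1 = x ∧ a.1 ≠ x ∧ ∃ y, H.Adj x y ∧ H.Adj y a.1)) := Iff.rfl

lemma adjrep {a m : W} (h : H.Adj a m) (a' m' : {v : W // ¬ H.Adj x v})
    (ha : a'.1 = a ∨ (H.Adj x a ∧ a'.1 = x)) (hm : m'.1 = m ∨ (H.Adj x m ∧ m'.1 = x)) :
    a' = m' ∨ (ncontract H x).Adj a' m' := by
  rcases ha with ha | ⟨hxa, ha⟩
  · rcases hm with hm | ⟨hxm, hm⟩
    · exact Or.inr (Or.inl (by rw [ha, hm]; exact h))
    · by_cases hax : a = x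
      · exact Or.inl (Subtype.ext (by rw [ha, hm, hax]))
      · refine Or.inr (Or.inr (Or.inr ⟨hm, by rw [ha]; exact hax, m, hxm, by rw [ha]; exact h.symm⟩))
  · rcases hm with hm | ⟨hxm, hm⟩
    · by_cases hmx : m = x
      · exact Or.inl (Subtype.ext (by rw [ha, hm, hmx]))
      · exact Or.inr (Or.inr (Or.inl ⟨ha, by rw [hm]; exact hmx, a, hxa, by rw [hm]; exact h⟩))
    · exact Or.inl (Subtype.ext (by rw [ha, hm]))

lemma walk_proj {a b : W} (p : H.Walk a b) :
    ∀ (a' b' : {v : W // ¬ H.Adj x v}),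
      (a'.1 = a ∨ (H.Adj x a ∧ a'.1 = x)) → (b'.1 = b ∨ (H.Adj x b ∧ b'.1 = x)) →
      ∃ q : (ncontract H x).Walk a' b', q.length ≤ p.length := by
  induction p with
  | nil =>
    intro a' b' ha hb
    have : a' = b' := by
      rcases ha with ha | ⟨hxa, ha⟩ <;> rcases hb with hb | ⟨hxb, hb⟩
      · exact Subtype.ext (ha.trans hb.symm)
      · exact absurd (ha ▸ a'.2) (by simpa using hxb)
      · exact absurd (hb ▸ b'.2) (by simpa using hxa)
      · exact Subtype.ext (ha.trans hb.symm)
    subst this; exact ⟨Walk.nil, by simp⟩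
  | cons h p ih =>
    intro a' b' ha hb
    rename_i u v w
    by_cases hadj : H.Adj x v
    · obtain ⟨q₂, hq₂⟩ := ih (xvert H x) b' (Or.inr ⟨hadj, rfl⟩) hb
      rcases adjrep H x h a' (xvert H x) ha (Or.inr ⟨hadj, rfl⟩) with heq | hAdj
      · subst heq; exact ⟨q₂, by simp [Walk.length_cons]; omega⟩
      · exact ⟨Walk.cons hAdj q₂, by simp [Walk.length_cons]; omega⟩
    · obtain ⟨q₂, hq₂⟩ := ih ⟨v, hadj⟩ b' (Or.inl rfl) hb
      rcases adjrep H x h a' ⟨v, hadj⟩ ha (Or.inl rfl) with heq | hAdj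
      · subst heq; exact ⟨q₂, by simp [Walk.length_cons]; omega⟩
      · exact ⟨Walk.cons hAdj q₂, by simp [Walk.length_cons]; omega⟩

lemma nc_connected (hconn : H.Connected) : (ncontract H x).Connected := by
  haveI hne : Nonempty {v : W // ¬ H.Adj x v} := ⟨xvert H x⟩
  refine Connected.mk (fun a' b' => ?_)
  obtain ⟨p⟩ := hconn.preconnected a'.1 b'.1
  obtain ⟨q, -⟩ := walk_proj H x p a' b' (Or.inl rfl) (Or.inl rfl)
  exact ⟨q⟩
end B

section C
variable {W : Type} (H : SimpleGraph W) (x : W)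

lemma dist_ge_two (hconn : H.Connected) (b' : {v : W // ¬ H.Adj x v}) (hbx : b'.1 ≠ x) :
    2 ≤ H.dist x b'.1 := by
  have h0 : H.dist x b'.1 ≠ 0 := fun h => hbx ((hconn.dist_eq_zero_iff.mp h).symm)
  have h1 : H.dist x b'.1 ≠ 1 := fun h => b'.2 (SimpleGraph.dist_eq_one_iff_adj.mp h)
  omega

lemma nc_dist_from_x_aux (hconn : H.Connected) :
    ∀ (n : ℕ) (b' : {v : W // ¬ H.Adj x v}), b'.1 ≠ x → H.dist x b'.1 ≤ n →
      (ncontract H x).dist (xvert H x) b' + 1 ≤ H.dist x b'.1 := by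
  intro n
  induction n with
  | zero =>
    intro b' hbx hle
    have := dist_ge_two H x hconn b' hbx; omega
  | succ n ih =>
    intro b' hbx hle
    have h2 : 2 ≤ H.dist x b'.1 := dist_ge_two H x hconn b' hbx
    obtain ⟨y, hyb, hyd⟩ := penult hconn (a := x) (b := b'.1) (by omega)
    by_cases hxy : H.Adj x y
    · have hAdj : (ncontract H x).Adj (xvert H x) b' :=
        Or.inr (Or.inl ⟨rfl, hbx, y, hxy, hyb⟩)
      have := SimpleGraph.dist_eq_one_iff_adj.mpr hAdj
      omega
    · have hyx : y ≠ x := fun h => b'.2 (h ▸ hyb)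
      have hydist : H.dist x y ≤ n := by omega
      have hih := ih ⟨y, hxy⟩ hyx hydist
      have hAdj : (ncontract H x).Adj (⟨y, hxy⟩ : {v : W // ¬ H.Adj x v}) b' := Or.inl hyb
      have htri : (ncontract H x).dist (xvert H x) b' ≤
          (ncontract H x).dist (xvert H x) ⟨y, hxy⟩ + 1 := by
        have := (nc_connected H x hconn).dist_triangle (u := xvert H x)
          (v := (⟨y, hxy⟩ : {v : W // ¬ H.Adj x v})) (w := b')
        have h1 := SimpleGraph.dist_eq_one_iff_adj.mpr hAdj
        omega
      have hih' : (ncontract H x).dist (xvert H x) ⟨y, hxy⟩ + 1 ≤ H.dist x y := hih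
      omega

lemma nc_dist_from_x (hconn : H.Connected) (b' : {v : W // ¬ H.Adj x v}) (hbx : b'.1 ≠ x) :
    (ncontract H x).dist (xvert H x) b' + 1 ≤ H.dist x b'.1 :=
  nc_dist_from_x_aux H x hconn _ b' hbx le_rfl

lemma walk_lift (hconn : H.Connected) {a' b' : {v : W // ¬ H.Adj x v}}
    (p : (ncontract H x).Walk a' b') :
    (H.dist a'.1 b'.1 ≤ p.length ∨ H.dist a'.1 x + H.dist x b'.1 ≤ p.length + 2)
    ∧ (a'.1 = x → H.dist x b'.1 ≤ p.length + 1) := by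
  induction p with
  | nil => exact ⟨Or.inl (by simp), fun h => by rw [h, SimpleGraph.dist_self]; omega⟩
  | cons h q ih =>
    rename_i a' m' b'
    rcases h with hH | ⟨hax, hmx, y, hxy, hym⟩ | ⟨hmx, hax, y, hxy, hya⟩
    · have hd1 : H.dist a'.1 m'.1 = 1 := SimpleGraph.dist_eq_one_iff_adj.mpr hH
      constructor
      · rcases ih.1 with hl | hr
        · left
          have := hconn.dist_triangle (u := a'.1) (v := m'.1) (w := b'.1)
          show _ ≤ q.length + 1; omega
        · right
          have := hconn.dist_triangle (u := a'.1) (v := m'.1) (w := x)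
          have hd1' : H.dist a'.1 m'.1 = 1 := hd1
          show _ ≤ q.length + 1 + 2; omega
      · intro hax
        exact absurd (by rwa [hax] at hH) m'.2
    · -- a'.1 = x, special edge
      have hdxm : H.dist x m'.1 ≤ 2 := by
        have := SimpleGraph.dist_le (Walk.cons hxy hym.toWalk)
        simpa using this
      have hdxb : H.dist x b'.1 ≤ q.length + 2 := by
        rcases ih.1 with hl | hr
        · have := hconn.dist_triangle (u := x) (v := m'.1) (w := b'.1)
          omega
        · omega
      constructor
      · right
        have h0 : H.dist a'.1 x = 0 := by rw [hax]; simp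
        show _ ≤ q.length + 1 + 2
        omega
      · intro _
        show _ ≤ q.length + 1 + 1; omega
    · -- m'.1 = x
      have hdax : H.dist a'.1 x ≤ 2 := by
        have := SimpleGraph.dist_le (Walk.cons hya.symm hxy.symm.toWalk)
        have h2 := SimpleGraph.dist_comm (G := H) (u := a'.1) (v := x)
        simp at this
        omega
      have hdxb : H.dist x b'.1 ≤ q.length + 1 := ih.2 hmx
      exact ⟨Or.inr (by show _ ≤ q.length + 1 + 2; omega), fun h => absurd h hax⟩
end C

section D
variable {W : Type} (H : SimpleGraph W) (x : W)

lemma nc_dist_lift_x (hconn : H.Connected) (b' : {v : W // ¬ H.Adj x v}) :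
    H.dist x b'.1 ≤ (ncontract H x).dist (xvert H x) b' + 1 := by
  obtain ⟨p, hp⟩ := ((nc_connected H x hconn) (xvert H x) b').exists_walk_length_eq_dist
  have := (walk_lift H x hconn p).2 rfl
  omega

lemma nc_dist_lift (hconn : H.Connected) (a' b' : {v : W // ¬ H.Adj x v}) :
    H.dist a'.1 b'.1 ≤ (ncontract H x).dist a' b' ∨
      H.dist a'.1 x + H.dist x b'.1 ≤ (ncontract H x).dist a' b' + 2 := by
  obtain ⟨p, hp⟩ := ((nc_connected H x hconn) a' b').exists_walk_length_eq_dist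
  rcases (walk_lift H x hconn p).1 with h | h
  · left; omega
  · right; omega

lemma nc_ecc_x [Finite W] (hconn : H.Connected) :
    eccentr (ncontract H x) (xvert H x) = eccentr H x - 1 := by
  haveI : Nonempty W := ⟨x⟩
  haveI : Nonempty {v : W // ¬ H.Adj x v} := ⟨xvert H x⟩
  set e := eccentr H x with he
  obtain ⟨b₀, hb₀⟩ := ecc_exists (ncontract H x) (xvert H x)
  have hub : eccentr (ncontract H x) (xvert H x) ≤ e - 1 := by
    by_cases hbx : b₀.1 = x
    · have : b₀ = xvert H x := Subtype.ext hbx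
      rw [hb₀, this, SimpleGraph.dist_self]
      omega
    · have h1 := nc_dist_from_x H x hconn b₀ hbx
      have h2 : H.dist x b₀.1 ≤ e := ecc_dist_le H x b₀.1
      omega
  have hlb : e - 1 ≤ eccentr (ncontract H x) (xvert H x) := by
    by_cases he1 : e ≤ 1
    · omega
    · obtain ⟨b, hb⟩ := ecc_exists H x
      have hbe : H.dist x b = e := hb.symm
      have hnadj : ¬ H.Adj x b := by
        intro hadj
        have := SimpleGraph.dist_eq_one_iff_adj.mpr hadj
        omega
      have h1 := nc_dist_lift_x H x hconn ⟨b, hnadj⟩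
      have h2 : (ncontract H x).dist (xvert H x) ⟨b, hnadj⟩ ≤
          eccentr (ncontract H x) (xvert H x) := ecc_dist_le _ _ _
      have h1' : H.dist x b ≤ (ncontract H x).dist (xvert H x) ⟨b, hnadj⟩ + 1 := h1
      omega
  omega

lemma nc_radius_lb [Finite W] (hconn : H.Connected) (r : ℕ)
    (hr : ∀ v, r ≤ eccentr H v) (u' : {v : W // ¬ H.Adj x v}) :
    r - 1 ≤ eccentr (ncontract H x) u' := by
  haveI : Nonempty W := ⟨x⟩
  haveI : Nonempty {v : W // ¬ H.Adj x v} := ⟨xvert H x⟩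
  by_cases hr1 : r ≤ 1
  · have : r - 1 = 0 := by omega
    rw [this]; exact Nat.zero_le _
  push_neg at hr1
  by_cases hux : u'.1 = x
  · have : u' = xvert H x := Subtype.ext hux
    rw [this, nc_ecc_x H x hconn]
    have := hr x
    omega
  by_contra hcon
  push_neg at hcon
  have hecc : eccentr (ncontract H x) u' ≤ r - 2 := by omega
  have ht2 : 2 ≤ H.dist u'.1 x := by
    have := dist_ge_two H x hconn u' hux
    rwa [SimpleGraph.dist_comm] at this
  set t := H.dist u'.1 x with htdef
  have htub : t ≤ r - 1 := by
    have h1 := nc_dist_lift_x H x hconn u'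
    have h2 : (ncontract H x).dist u' (xvert H x) ≤ eccentr (ncontract H x) u' :=
      ecc_dist_le _ _ _
    rw [SimpleGraph.dist_comm] at h2
    have h3 : H.dist x u'.1 = t := SimpleGraph.dist_comm ..
    omega
  have K : ∀ z : W, r - 1 ≤ H.dist u'.1 z → H.dist x z + t ≤ r := by
    intro z hz
    by_cases hxz : H.Adj x z
    · have := SimpleGraph.dist_eq_one_iff_adj.mpr hxz
      omega
    by_cases hzx : z = x
    · subst hzx
      rw [SimpleGraph.dist_self]
      omega
    rcases nc_dist_lift H x hconn u' ⟨z, hxz⟩ with h | h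
    · have h' : H.dist u'.1 z ≤ (ncontract H x).dist u' ⟨z, hxz⟩ := h
      have h2 : (ncontract H x).dist u' ⟨z, hxz⟩ ≤ eccentr (ncontract H x) u' :=
        ecc_dist_le _ _ _
      omega
    · have h' : H.dist u'.1 x + H.dist x z ≤ (ncontract H x).dist u' ⟨z, hxz⟩ + 2 := h
      have h2 : (ncontract H x).dist u' ⟨z, hxz⟩ ≤ eccentr (ncontract H x) u' :=
        ecc_dist_le _ _ _
      omega
  -- neighbor of u toward x
  have hxu : H.dist x u'.1 = t := SimpleGraph.dist_comm ..
  obtain ⟨q, hqu, hqd⟩ := penult hconn (a := x) (b := u'.1) (by omega)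
  -- q is adjacent to u'.1, with dist x q = t - 1
  obtain ⟨z, hz⟩ := ecc_exists H q
  have hqz : r ≤ H.dist q z := hz ▸ hr q
  have htri1 : H.dist q z ≤ H.dist q x + H.dist x z := hconn.dist_triangle
  have hqx : H.dist q x = t - 1 := by
    have : H.dist x q = t - 1 := by omega
    rw [SimpleGraph.dist_comm]; omega
  have hxz : r - t + 1 ≤ H.dist x z := by omega
  have huz : H.dist u'.1 z ≤ r - 2 := by
    by_contra hcc
    push_neg at hcc
    have := K z (by omega)
    omega
  have htri2 : H.dist q z ≤ H.dist q u'.1 + H.dist u'.1 z := hconn.dist_triangle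
  have hqu1 : H.dist q u'.1 = 1 := SimpleGraph.dist_eq_one_iff_adj.mpr hqu
  omega
end D

lemma iter_finite {V : Type} [Finite V] (G : SimpleGraph V) (c : V) :
    ∀ k, Finite (iterC G c k).1 := by
  intro k
  induction k with
  | zero => exact inferInstanceAs (Finite V)
  | succ k ih =>
    haveI := ih
    exact inferInstanceAs (Finite {v : (iterC G c k).1 // ¬ (iterC G c k).2.1.Adj (iterC G c k).2.2 v})

lemma iter_inv {V : Type} [Finite V] (G : SimpleGraph V) (hconn : G.Connected) (c : V)
    (r : ℕ) (hc : eccentr G c = r) (hr : ∀ v, r ≤ eccentr G v) :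
    ∀ k, k ≤ r → (iterC G c k).2.1.Connected ∧
      eccentr (iterC G c k).2.1 (iterC G c k).2.2 = r - k ∧
      (∀ v, r - k ≤ eccentr (iterC G c k).2.1 v) := by
  intro k
  induction k with
  | zero =>
    intro _
    exact ⟨hconn, by rw [Nat.sub_zero]; exact hc, fun v => by rw [Nat.sub_zero]; exact hr v⟩
  | succ k ih =>
    intro hk1
    obtain ⟨hcon, hecc, hlb⟩ := ih (by omega)
    haveI : Finite (iterC G c k).1 := iter_finite G c k
    refine ⟨?_, ?_, ?_⟩
    · exact nc_connected (iterC G c k).2.1 (iterC G c k).2.2 hcon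
    · show eccentr (ncontract (iterC G c k).2.1 (iterC G c k).2.2)
        (xvert (iterC G c k).2.1 (iterC G c k).2.2) = r - (k + 1)
      rw [nc_ecc_x _ _ hcon, hecc]
      omega
    · intro v
      have h := nc_radius_lb (iterC G c k).2.1 (iterC G c k).2.2 hcon (r - k) hlb v
      have : r - (k + 1) ≤ (r - k) - 1 := by omega
      exact le_trans this h


theorem stmt_11 {V : Type} [Fintype V] (G : SimpleGraph V) (hconn : G.Connected)
    (c : V) (hc : eccentr G c = grRadius G) :
    (∀ k ≤ grRadius G, grRadius (iterC G c k).2.1 = grRadius G - k) ∧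
      Nat.card (iterC G c (grRadius G)).1 = 1 := by
  haveI : Finite V := Finite.of_fintype V
  have hr : ∀ v, grRadius G ≤ eccentr G v := fun v => Nat.sInf_le ⟨v, rfl⟩
  have inv := iter_inv G hconn c (grRadius G) hc hr
  constructor
  · intro k hk
    obtain ⟨hcon, hecc, hlb⟩ := inv k hk
    refine le_antisymm (Nat.sInf_le ⟨(iterC G c k).2.2, hecc⟩) ?_
    refine le_csInf ⟨_, ⟨(iterC G c k).2.2, rfl⟩⟩ ?_
    rintro b ⟨v, rfl⟩
    exact hlb v
  · obtain ⟨hcon, hecc, hlb⟩ := inv (grRadius G) le_rfl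
    haveI := iter_finite G c (grRadius G)
    rw [Nat.card_eq_one_iff_unique]
    have hzero : eccentr (iterC G c (grRadius G)).2.1 (iterC G c (grRadius G)).2.2 = 0 := by
      rw [hecc]; omega
    have hall : ∀ v, v = (iterC G c (grRadius G)).2.2 := by
      intro v
      have h1 : (iterC G c (grRadius G)).2.1.dist (iterC G c (grRadius G)).2.2 v ≤ 0 := by
        rw [← hzero]; exact ecc_dist_le _ _ _
      have h2 : (iterC G c (grRadius G)).2.1.dist (iterC G c (grRadius G)).2.2 v = 0 := by omega
      exact (hcon.dist_eq_zero_iff.mp h2).symm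
    exact ⟨⟨fun a b => (hall a).trans (hall b).symm⟩, ⟨(iterC G c (grRadius G)).2.2⟩⟩
end
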